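/- Let n and m be finite index types with n nonempty. Let M be a symmetric positive definite real n×n matrix and g a real n×n matrix such that gᵀM + (gᵀM)ᵀ is positive definite. Let B be the block diagonal matrix with upper-left block M⁻¹gᵀ, lower-right block the m×m identity matrix, and zero off-diagonal blocks. Then vᵀBv > 0 for every nonzero v ∈ ℝⁿ⁺ᵐ. -/

import Mathlib

open Matrix

/-- If `M` is symmetric positive definite and `gᵀM + (gᵀM)ᵀ` is positive definite, then the
quadratic form of the block diagonal matrix `B = diag(M⁻¹gᵀ, 𝟙)` is positive. -/
theorem stmt_6 {n m : Type*} [Fintype n] [Nonempty n] [DecidableEq n]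
    [Fintype m] [DecidableEq m]
    (M g : Matrix n n ℝ) (hM : M.PosDef)
    (h : (gᵀ * M + (gᵀ * M)ᵀ).PosDef) :
    ∀ v : n ⊕ m → ℝ, v ≠ 0 →
      0 < v ⬝ᵥ ((Matrix.fromBlocks (M⁻¹ * gᵀ) 0 0 (1 : Matrix m m ℝ)) *ᵥ v) := by
  have hMdet : IsUnit M.det := isUnit_iff_ne_zero.mpr hM.det_pos.ne'
  have hMsymm : Mᵀ = M := hM.isHermitian
  -- key: quadratic form of M⁻¹ * gᵀ is positive
  have key : ∀ x : n → ℝ, x ≠ 0 → 0 < x ⬝ᵥ (M⁻¹ * gᵀ) *ᵥ x := by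
    intro x hx
    set y := M⁻¹ *ᵥ x with hy
    have hxy : M *ᵥ y = x := by
      rw [hy, mulVec_mulVec, Matrix.mul_nonsing_inv M hMdet, one_mulVec]
    have hy0 : y ≠ 0 := by
      intro h0
      apply hx
      rw [← hxy, h0, mulVec_zero]
    have hq : 0 < y ⬝ᵥ (gᵀ * M + (gᵀ * M)ᵀ) *ᵥ y := h.dotProduct_mulVec_pos hy0
    have htr : y ⬝ᵥ (gᵀ * M)ᵀ *ᵥ y = y ⬝ᵥ (gᵀ * M) *ᵥ y := by
      rw [dotProduct_mulVec, vecMul_transpose, dotProduct_comm]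
    rw [add_mulVec, dotProduct_add, htr] at hq
    have hq' : 0 < y ⬝ᵥ (gᵀ * M) *ᵥ y := by linarith
    have e1 : M * ((M⁻¹ * gᵀ) * M) = gᵀ * M := by
      rw [Matrix.mul_assoc, Matrix.mul_nonsing_inv_cancel_left _ _ hMdet]
    have heq : x ⬝ᵥ (M⁻¹ * gᵀ) *ᵥ x = y ⬝ᵥ (gᵀ * M) *ᵥ y := by
      calc x ⬝ᵥ (M⁻¹ * gᵀ) *ᵥ x
          = (M *ᵥ y) ⬝ᵥ (M⁻¹ * gᵀ) *ᵥ (M *ᵥ y) := by rw [hxy]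
        _ = (y ᵥ* Mᵀ) ⬝ᵥ (M⁻¹ * gᵀ) *ᵥ (M *ᵥ y) := by rw [vecMul_transpose]
        _ = y ⬝ᵥ Mᵀ *ᵥ ((M⁻¹ * gᵀ) *ᵥ (M *ᵥ y)) := (dotProduct_mulVec _ _ _).symm
        _ = y ⬝ᵥ (M * ((M⁻¹ * gᵀ) * M)) *ᵥ y := by rw [hMsymm, mulVec_mulVec, mulVec_mulVec, Matrix.mul_assoc]
        _ = y ⬝ᵥ (gᵀ * M) *ᵥ y := by rw [e1]
    rw [heq]; exact hq' 
  intro v hv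
  have hv' : v = Sum.elim (v ∘ Sum.inl) (v ∘ Sum.inr) := (Sum.elim_comp_inl_inr v).symm
  rw [hv', fromBlocks_mulVec, sumElim_dotProduct_sumElim]
  simp only [zero_mulVec, add_zero, zero_add, one_mulVec, Sum.elim_comp_inl, Sum.elim_comp_inr]
  have hnn : ∀ (w : m → ℝ), (0:ℝ) ≤ w ⬝ᵥ w :=
    fun w => Finset.sum_nonneg fun i _ => mul_self_nonneg _
  by_cases hx : (v ∘ Sum.inl) = 0
  · have hw : (v ∘ Sum.inr) ≠ 0 := by
      intro hw0
      apply hv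
      funext i
      cases i with
      | inl i => exact congrFun hx i
      | inr i => exact congrFun hw0 i
    have h1 : 0 < (v ∘ Sum.inr) ⬝ᵥ (v ∘ Sum.inr) := by
      rcases (hnn (v ∘ Sum.inr)).lt_or_eq with h' | h'
      · exact h'
      · exact absurd ((dotProduct_self_eq_zero).mp h'.symm) hw
    have h2 : (0:ℝ) ≤ (v ∘ Sum.inl) ⬝ᵥ (M⁻¹ * gᵀ) *ᵥ (v ∘ Sum.inl) := by
      rw [hx]; simp
    linarith
  · have h1 := key _ hx
    have h2 : (0:ℝ) ≤ (v ∘ Sum.inr) ⬝ᵥ (v ∘ Sum.inr) := hnn _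
    linarith
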